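/- PostQAL is closed under complementation, union, and intersection: if L, L₁, L₂ ⊆ Σ* belong to PostQAL, then so do Σ* \ L, L₁ ∪ L₂, and L₁ ∩ L₂. -/

import Mathlib

noncomputable section

/-- The input alphabet extended with the two endmarkers `¢` and `$`. -/
inductive ESym (α : Type) : Type where
  | cent : ESym α
  | dollar : ESym α
  | letter : α → ESym α

/-- The diagonal 0-1 projection matrix supported on a set of states. -/
def projM {m : ℕ} (S : Finset (Fin m)) : Matrix (Fin m) (Fin m) ℂ :=
  Matrix.diagonal (fun i => if i ∈ S then 1 else 0)

/-- The density matrix obtained by applying, in order, the Kraus families for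
`¢`, the letters of `w`, and `$` to the initial density matrix `|q₁⟩⟨q₁|`. -/
def qRun {α : Type} {n : ℕ} {k : ESym α → ℕ}
    (E : ∀ σ : ESym α, Fin (k σ) → Matrix (Fin (n + 1)) (Fin (n + 1)) ℂ)
    (w : List α) : Matrix (Fin (n + 1)) (Fin (n + 1)) ℂ :=
  (ESym.cent :: (w.map ESym.letter ++ [ESym.dollar])).foldl
    (fun ρ σ => ∑ i : Fin (k σ), E σ i * ρ * (E σ i).conjTranspose)
    (Matrix.single 0 0 1)

/-- A real-time quantum finite automaton with postselection (RT-PostQFA). -/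
structure PostQFA (α : Type) where
  n : ℕ
  k : ESym α → ℕ
  E : ∀ σ : ESym α, Fin (k σ) → Matrix (Fin (n + 1)) (Fin (n + 1)) ℂ
  kraus : ∀ σ : ESym α, ∑ i : Fin (k σ), (E σ i).conjTranspose * E σ i = 1
  Qpa : Finset (Fin (n + 1))
  Qpr : Finset (Fin (n + 1))
  disj : Disjoint Qpa Qpr
  postPos : ∀ w : List α,
    0 < ((projM Qpa * qRun E w).trace).re + ((projM Qpr * qRun E w).trace).re

/-- Acceptance probability before postselection. -/
def PostQFA.pacc {α : Type} (M : PostQFA α) (w : List α) : ℝ :=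
  ((projM M.Qpa * qRun M.E w).trace).re

/-- Rejection probability before postselection. -/
def PostQFA.prej {α : Type} (M : PostQFA α) (w : List α) : ℝ :=
  ((projM M.Qpr * qRun M.E w).trace).re

/-- Normalized acceptance probability of an RT-PostQFA. -/
def PostQFA.fa {α : Type} (M : PostQFA α) (w : List α) : ℝ :=
  M.pacc w / (M.pacc w + M.prej w)

/-- Recognition of a language with error bound `ε`. -/
def PostQFA.Recognizes {α : Type} (M : PostQFA α) (L : Set (List α)) (ε : ℝ) : Prop :=
  ∀ w : List α, (w ∈ L → 1 - ε ≤ M.fa w) ∧ (w ∉ L → M.fa w ≤ ε)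

/-- The class of languages recognized by RT-PostQFAs with bounded error. -/
def PostQAL {α : Type} (L : Set (List α)) : Prop :=
  ∃ (M : PostQFA α) (ε : ℝ), 0 ≤ ε ∧ ε < 1 / 2 ∧ M.Recognizes L ε

/-- Recognition with zero error: `fa = 1` on members, `fa = 0` on non-members. -/
def PostQFA.RecognizesZero {α : Type} (M : PostQFA α) (L : Set (List α)) : Prop :=
  ∀ w : List α, (w ∈ L → M.fa w = 1) ∧ (w ∉ L → M.fa w = 0)

/-- The class of languages recognized by RT-PostQFAs with zero error. -/
def ZPostQAL {α : Type} (L : Set (List α)) : Prop :=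
  ∃ M : PostQFA α, M.RecognizesZero L


/-! ### Auxiliary development for the closure theorem -/

open Matrix
open scoped ComplexOrder Kronecker

namespace PQC

/-! #### Generic matrix lemmas -/

lemma submatrix_sum {ι : Type*} (s : Finset ι) {m n m' n' : Type*}
    (f : ι → Matrix m n ℂ) (r : m' → m) (c : n' → n) :
    (∑ i ∈ s, f i).submatrix r c = ∑ i ∈ s, (f i).submatrix r c := by
  ext x y
  simp [Matrix.submatrix_apply, Matrix.sum_apply]

lemma sum_kron {ι : Type*} (s : Finset ι) {m n m' n' : Type*}
    (A : ι → Matrix m n ℂ) (B : Matrix m' n' ℂ) :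
    (∑ i ∈ s, A i) ⊗ₖ B = ∑ i ∈ s, (A i ⊗ₖ B) := by
  ext ⟨x, x'⟩ ⟨y, y'⟩
  simp [Matrix.kroneckerMap_apply, Matrix.sum_apply, Finset.sum_mul]

lemma kron_sum {ι : Type*} (s : Finset ι) {m n m' n' : Type*}
    (A : Matrix m n ℂ) (B : ι → Matrix m' n' ℂ) :
    A ⊗ₖ (∑ i ∈ s, B i) = ∑ i ∈ s, (A ⊗ₖ B i) := by
  ext ⟨x, x'⟩ ⟨y, y'⟩
  simp [Matrix.kroneckerMap_apply, Matrix.sum_apply, Finset.mul_sum]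

lemma conjT_kron {m n m' n' : Type*} (A : Matrix m n ℂ) (B : Matrix m' n' ℂ) :
    (A ⊗ₖ B)ᴴ = Aᴴ ⊗ₖ Bᴴ := by
  ext ⟨x, x'⟩ ⟨y, y'⟩
  simp [Matrix.conjTranspose_apply, Matrix.kroneckerMap_apply, mul_comm]

lemma reindex_mul {m n : Type*} [Fintype m] [Fintype n] [DecidableEq n] (e : m ≃ n)
    (A B : Matrix m m ℂ) :
    (Matrix.reindex e e A) * (Matrix.reindex e e B) = Matrix.reindex e e (A * B) := by
  simp only [Matrix.reindex_apply]
  exact Matrix.submatrix_mul_equiv A B _ _ _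

lemma reindex_conjT {m n : Type*} (e : m ≃ n) (A : Matrix m m ℂ) :
    (Matrix.reindex e e A)ᴴ = Matrix.reindex e e Aᴴ := by
  simp [Matrix.reindex_apply, Matrix.conjTranspose_submatrix]

lemma reindex_sum {ι : Type*} (s : Finset ι) {m n : Type*} (e : m ≃ n)
    (f : ι → Matrix m m ℂ) :
    Matrix.reindex e e (∑ i ∈ s, f i) = ∑ i ∈ s, Matrix.reindex e e (f i) := by
  simp [Matrix.reindex_apply, submatrix_sum]

lemma reindex_one {m n : Type*} [Fintype m] [DecidableEq m] [DecidableEq n] (e : m ≃ n) :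
    Matrix.reindex e e (1 : Matrix m m ℂ) = 1 := by
  simp [Matrix.reindex_apply, Matrix.submatrix_one_equiv]

/-! #### Positive semidefiniteness facts -/

lemma diag_nonneg {m : ℕ} {ρ : Matrix (Fin m) (Fin m) ℂ} (h : ρ.PosSemidef) (i : Fin m) :
    0 ≤ ρ i i := by
  have := h.diag_nonneg (i := i)
  simpa [dotProduct, Matrix.mulVec, Pi.single_apply, Finset.sum_ite_eq,
    Finset.sum_ite_eq'] using this

lemma psd_init {m : ℕ} : (Matrix.single (0 : Fin (m + 1)) 0 (1 : ℂ)).PosSemidef := by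
  have h : Matrix.single (0 : Fin (m + 1)) 0 (1 : ℂ)
      = Matrix.diagonal (fun i => if i = 0 then 1 else 0) := by
    ext x y
    by_cases hx : x = 0 <;> by_cases hy : y = 0 <;>
      simp [Matrix.single, Matrix.diagonal_apply, hx, hy] <;> aesop
  rw [h]
  refine Matrix.PosSemidef.diagonal ?_
  intro i
  dsimp
  split <;> simp

lemma psd_foldl {α : Type} {n : ℕ} {k : ESym α → ℕ}
    (E : ∀ σ : ESym α, Fin (k σ) → Matrix (Fin (n + 1)) (Fin (n + 1)) ℂ)
    (l : List (ESym α)) :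
    ∀ ρ : Matrix (Fin (n + 1)) (Fin (n + 1)) ℂ, ρ.PosSemidef →
    (l.foldl (fun ρ σ => ∑ i : Fin (k σ), E σ i * ρ * (E σ i).conjTranspose) ρ).PosSemidef := by
  induction l with
  | nil => intro ρ h; exact h
  | cons σ l ih =>
    intro ρ h
    simp only [List.foldl_cons]
    apply ih
    refine Finset.sum_induction _ _ (fun A B hA hB => hA.add hB) Matrix.PosSemidef.zero ?_
    intro i _
    exact h.mul_mul_conjTranspose_same _

lemma psd_qRun {α : Type} {n : ℕ} {k : ESym α → ℕ}
    (E : ∀ σ : ESym α, Fin (k σ) → Matrix (Fin (n + 1)) (Fin (n + 1)) ℂ)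
    (w : List α) : (qRun E w).PosSemidef :=
  psd_foldl E _ _ psd_init

/-! #### Diagonal sums -/

def dsum {m : ℕ} (S : Finset (Fin m)) (ρ : Matrix (Fin m) (Fin m) ℂ) : ℂ :=
  ∑ i ∈ S, ρ i i

lemma trace_projM_mul {m : ℕ} (S : Finset (Fin m)) (ρ : Matrix (Fin m) (Fin m) ℂ) :
    (projM S * ρ).trace = dsum S ρ := by
  rw [Matrix.trace, dsum]
  have h : ∀ i, (projM S * ρ).diag i = if i ∈ S then ρ i i else 0 := by
    intro i
    simp [Matrix.diag, projM, Matrix.diagonal_mul, ite_mul]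
  simp only [h]
  simp [Finset.sum_ite_mem]

lemma dsum_nonneg {m : ℕ} (S : Finset (Fin m)) {ρ : Matrix (Fin m) (Fin m) ℂ}
    (h : ρ.PosSemidef) : 0 ≤ dsum S ρ :=
  Finset.sum_nonneg fun i _ => diag_nonneg h i

lemma dsum_union {m : ℕ} {A B : Finset (Fin m)} (h : Disjoint A B)
    (ρ : Matrix (Fin m) (Fin m) ℂ) :
    dsum (A ∪ B) ρ = dsum A ρ + dsum B ρ :=
  Finset.sum_union h

lemma re_mul_of_nonneg {z w : ℂ} (hz : 0 ≤ z) (hw : 0 ≤ w) :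
    (z * w).re = z.re * w.re := by
  have hz' := (Complex.nonneg_iff.mp hz).2
  rw [Complex.mul_re, ← hz']
  ring

/-! #### Tensor construction -/

variable {α : Type}

def prodEquiv (n₁ n₂ : ℕ) : Fin (n₁ + 1) × Fin (n₂ + 1) ≃ Fin (n₁ * n₂ + n₁ + n₂ + 1) :=
  finProdFinEquiv.trans (finCongr (by ring))

lemma prodEquiv_zero (n₁ n₂ : ℕ) : prodEquiv n₁ n₂ (0, 0) = 0 := by
  ext
  simp [prodEquiv, finProdFinEquiv]

def tK (M₁ M₂ : PostQFA α) : ESym α → ℕ := fun σ => M₁.k σ * M₂.k σ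

def tE (M₁ M₂ : PostQFA α) :
    ∀ σ : ESym α, Fin (tK M₁ M₂ σ) →
      Matrix (Fin (M₁.n * M₂.n + M₁.n + M₂.n + 1)) (Fin (M₁.n * M₂.n + M₁.n + M₂.n + 1)) ℂ :=
  fun σ i => Matrix.reindex (prodEquiv M₁.n M₂.n) (prodEquiv M₁.n M₂.n)
    ((M₁.E σ (finProdFinEquiv.symm i).1) ⊗ₖ (M₂.E σ (finProdFinEquiv.symm i).2))

lemma tE_apply (M₁ M₂ : PostQFA α) (σ : ESym α) (p : Fin (M₁.k σ) × Fin (M₂.k σ)) :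
    tE M₁ M₂ σ (finProdFinEquiv p) = Matrix.reindex (prodEquiv M₁.n M₂.n) (prodEquiv M₁.n M₂.n)
      ((M₁.E σ p.1) ⊗ₖ (M₂.E σ p.2)) := by
  simp [tE]

lemma tE_kraus (M₁ M₂ : PostQFA α) (σ : ESym α) :
    ∑ i : Fin (tK M₁ M₂ σ), (tE M₁ M₂ σ i).conjTranspose * tE M₁ M₂ σ i = 1 := by
  unfold tK
  rw [← Equiv.sum_comp (finProdFinEquiv : Fin (M₁.k σ) × Fin (M₂.k σ) ≃ Fin (tK M₁ M₂ σ))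
    (fun i => (tE M₁ M₂ σ i).conjTranspose * tE M₁ M₂ σ i)]
  have h : ∀ p : Fin (M₁.k σ) × Fin (M₂.k σ),
      (tE M₁ M₂ σ (finProdFinEquiv p)).conjTranspose * tE M₁ M₂ σ (finProdFinEquiv p)
      = Matrix.reindex (prodEquiv M₁.n M₂.n) (prodEquiv M₁.n M₂.n)
          (((M₁.E σ p.1)ᴴ * M₁.E σ p.1) ⊗ₖ ((M₂.E σ p.2)ᴴ * M₂.E σ p.2)) := by
    intro p
    rw [tE_apply, reindex_conjT, conjT_kron, reindex_mul, Matrix.mul_kronecker_mul]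
  simp only [h]
  rw [← reindex_sum]
  rw [Fintype.sum_prod_type]
  have h2 : ∀ i : Fin (M₁.k σ),
      ∑ j : Fin (M₂.k σ), ((M₁.E σ i)ᴴ * M₁.E σ i) ⊗ₖ ((M₂.E σ j)ᴴ * M₂.E σ j)
      = ((M₁.E σ i)ᴴ * M₁.E σ i) ⊗ₖ (1 : Matrix (Fin (M₂.n + 1)) (Fin (M₂.n + 1)) ℂ) := by
    intro i
    rw [← kron_sum]
    rw [M₂.kraus σ]
  simp only [h2]
  rw [← sum_kron, M₁.kraus σ, Matrix.one_kronecker_one, reindex_one]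

lemma tE_step (M₁ M₂ : PostQFA α) (σ : ESym α)
    (ρ₁ : Matrix (Fin (M₁.n + 1)) (Fin (M₁.n + 1)) ℂ)
    (ρ₂ : Matrix (Fin (M₂.n + 1)) (Fin (M₂.n + 1)) ℂ) :
    (∑ i : Fin (tK M₁ M₂ σ), tE M₁ M₂ σ i *
        Matrix.reindex (prodEquiv M₁.n M₂.n) (prodEquiv M₁.n M₂.n) (ρ₁ ⊗ₖ ρ₂) *
        (tE M₁ M₂ σ i).conjTranspose)
    = Matrix.reindex (prodEquiv M₁.n M₂.n) (prodEquiv M₁.n M₂.n)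
        ((∑ i : Fin (M₁.k σ), M₁.E σ i * ρ₁ * (M₁.E σ i).conjTranspose) ⊗ₖ
         (∑ j : Fin (M₂.k σ), M₂.E σ j * ρ₂ * (M₂.E σ j).conjTranspose)) := by
  unfold tK
  rw [← Equiv.sum_comp (finProdFinEquiv : Fin (M₁.k σ) × Fin (M₂.k σ) ≃ Fin (tK M₁ M₂ σ))]
  have h : ∀ p : Fin (M₁.k σ) × Fin (M₂.k σ),
      tE M₁ M₂ σ (finProdFinEquiv p) *
        Matrix.reindex (prodEquiv M₁.n M₂.n) (prodEquiv M₁.n M₂.n) (ρ₁ ⊗ₖ ρ₂) *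
        (tE M₁ M₂ σ (finProdFinEquiv p)).conjTranspose
      = Matrix.reindex (prodEquiv M₁.n M₂.n) (prodEquiv M₁.n M₂.n)
          ((M₁.E σ p.1 * ρ₁ * (M₁.E σ p.1)ᴴ) ⊗ₖ (M₂.E σ p.2 * ρ₂ * (M₂.E σ p.2)ᴴ)) := by
    intro p
    rw [tE_apply, reindex_conjT, conjT_kron, reindex_mul, reindex_mul,
      Matrix.mul_kronecker_mul, Matrix.mul_kronecker_mul]
  simp only [h]
  rw [← reindex_sum]
  congr 1
  rw [Fintype.sum_prod_type]
  have h2 : ∀ i : Fin (M₁.k σ),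
      ∑ j : Fin (M₂.k σ), (M₁.E σ i * ρ₁ * (M₁.E σ i)ᴴ) ⊗ₖ (M₂.E σ j * ρ₂ * (M₂.E σ j)ᴴ)
      = (M₁.E σ i * ρ₁ * (M₁.E σ i)ᴴ) ⊗ₖ
          (∑ j : Fin (M₂.k σ), M₂.E σ j * ρ₂ * (M₂.E σ j)ᴴ) := by
    intro i
    rw [← kron_sum]
  simp only [h2]
  rw [← sum_kron]

lemma foldl_tensor (M₁ M₂ : PostQFA α) (l : List (ESym α)) :
    ∀ (ρ₁ : Matrix (Fin (M₁.n + 1)) (Fin (M₁.n + 1)) ℂ)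
      (ρ₂ : Matrix (Fin (M₂.n + 1)) (Fin (M₂.n + 1)) ℂ),
    l.foldl (fun ρ σ => ∑ i : Fin (tK M₁ M₂ σ), tE M₁ M₂ σ i * ρ * (tE M₁ M₂ σ i).conjTranspose)
        (Matrix.reindex (prodEquiv M₁.n M₂.n) (prodEquiv M₁.n M₂.n) (ρ₁ ⊗ₖ ρ₂))
    = Matrix.reindex (prodEquiv M₁.n M₂.n) (prodEquiv M₁.n M₂.n)
        ((l.foldl (fun ρ σ => ∑ i : Fin (M₁.k σ), M₁.E σ i * ρ * (M₁.E σ i).conjTranspose) ρ₁) ⊗ₖ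
         (l.foldl (fun ρ σ => ∑ i : Fin (M₂.k σ), M₂.E σ i * ρ * (M₂.E σ i).conjTranspose) ρ₂)) := by
  induction l with
  | nil => intro ρ₁ ρ₂; rfl
  | cons σ l ih =>
    intro ρ₁ ρ₂
    simp only [List.foldl_cons]
    rw [tE_step, ih]

lemma init_tensor (M₁ M₂ : PostQFA α) :
    (Matrix.single (0 : Fin (M₁.n * M₂.n + M₁.n + M₂.n + 1)) 0 (1 : ℂ))
    = Matrix.reindex (prodEquiv M₁.n M₂.n) (prodEquiv M₁.n M₂.n)
        ((Matrix.single (0 : Fin (M₁.n + 1)) 0 (1 : ℂ)) ⊗ₖ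
         (Matrix.single (0 : Fin (M₂.n + 1)) 0 (1 : ℂ))) := by
  ext x y
  obtain ⟨p, rfl⟩ := (prodEquiv M₁.n M₂.n).surjective x
  obtain ⟨q, rfl⟩ := (prodEquiv M₁.n M₂.n).surjective y
  rw [Matrix.reindex_apply, Matrix.submatrix_apply, Equiv.symm_apply_apply,
    Matrix.kroneckerMap_apply]
  have hp : ∀ v : Fin (M₁.n + 1) × Fin (M₂.n + 1),
      ((0 : Fin (M₁.n * M₂.n + M₁.n + M₂.n + 1)) = prodEquiv M₁.n M₂.n v)
        ↔ ((0 = v.1) ∧ (0 = v.2)) := by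
    intro v
    rw [eq_comm, ← prodEquiv_zero M₁.n M₂.n, Equiv.apply_eq_iff_eq, Prod.ext_iff]
    simp [eq_comm]
  simp only [Matrix.single, Matrix.of_apply, hp]
  by_cases a : p.1 = 0 <;> by_cases b : p.2 = 0 <;>
    by_cases c : q.1 = 0 <;> by_cases d : q.2 = 0 <;>
    simp [a, b, c, d, eq_comm]

lemma qRun_tE (M₁ M₂ : PostQFA α) (w : List α) :
    qRun (tE M₁ M₂) w
    = Matrix.reindex (prodEquiv M₁.n M₂.n) (prodEquiv M₁.n M₂.n)
        ((qRun M₁.E w) ⊗ₖ (qRun M₂.E w)) := by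
  unfold qRun
  rw [init_tensor, foldl_tensor]

lemma dsum_map_prod (M₁ M₂ : PostQFA α)
    (S₁ : Finset (Fin (M₁.n + 1))) (S₂ : Finset (Fin (M₂.n + 1)))
    (ρ₁ : Matrix (Fin (M₁.n + 1)) (Fin (M₁.n + 1)) ℂ)
    (ρ₂ : Matrix (Fin (M₂.n + 1)) (Fin (M₂.n + 1)) ℂ) :
    dsum ((S₁ ×ˢ S₂).map (prodEquiv M₁.n M₂.n).toEmbedding)
      (Matrix.reindex (prodEquiv M₁.n M₂.n) (prodEquiv M₁.n M₂.n) (ρ₁ ⊗ₖ ρ₂))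
    = dsum S₁ ρ₁ * dsum S₂ ρ₂ := by
  rw [dsum, Finset.sum_map]
  simp only [Matrix.reindex_apply, Matrix.submatrix_apply, Equiv.toEmbedding_apply,
    Equiv.symm_apply_apply, Matrix.kroneckerMap_apply]
  rw [Finset.sum_product]
  rw [dsum, dsum, Finset.sum_mul_sum]

/-- Core trace identity for the tensor machine. -/
lemma tensor_trace (M₁ M₂ : PostQFA α)
    (S₁ : Finset (Fin (M₁.n + 1))) (S₂ : Finset (Fin (M₂.n + 1))) (w : List α) :
    ((projM ((S₁ ×ˢ S₂).map (prodEquiv M₁.n M₂.n).toEmbedding) * qRun (tE M₁ M₂) w).trace).re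
    = ((projM S₁ * qRun M₁.E w).trace).re * ((projM S₂ * qRun M₂.E w).trace).re := by
  rw [trace_projM_mul, trace_projM_mul, trace_projM_mul, qRun_tE, dsum_map_prod]
  exact re_mul_of_nonneg (dsum_nonneg _ (psd_qRun _ _)) (dsum_nonneg _ (psd_qRun _ _))

lemma prod_disj_left {β γ : Type*} {A B : Finset β} {C D : Finset γ} (h : Disjoint A B) :
    Disjoint (A ×ˢ C) (B ×ˢ D) := by
  rw [Finset.disjoint_left]
  intro p hp hq
  rw [Finset.mem_product] at hp hq
  exact Finset.disjoint_left.mp h hp.1 hq.1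

lemma prod_disj_right {β γ : Type*} {A B : Finset β} {C D : Finset γ} (h : Disjoint C D) :
    Disjoint (A ×ˢ C) (B ×ˢ D) := by
  rw [Finset.disjoint_left]
  intro p hp hq
  rw [Finset.mem_product] at hp hq
  exact Finset.disjoint_left.mp h hp.2 hq.2

/-! #### Basic bounds on machines -/

lemma sum_pos (M : PostQFA α) (w : List α) : 0 < M.pacc w + M.prej w := M.postPos w

lemma pacc_nonneg (M : PostQFA α) (w : List α) : 0 ≤ M.pacc w := by
  rw [PostQFA.pacc, trace_projM_mul]
  exact (Complex.nonneg_iff.mp (dsum_nonneg _ (psd_qRun _ _))).1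

lemma prej_nonneg (M : PostQFA α) (w : List α) : 0 ≤ M.prej w := by
  rw [PostQFA.prej, trace_projM_mul]
  exact (Complex.nonneg_iff.mp (dsum_nonneg _ (psd_qRun _ _))).1

lemma fa_nonneg (M : PostQFA α) (w : List α) : 0 ≤ M.fa w :=
  div_nonneg (pacc_nonneg M w) (le_of_lt (sum_pos M w))

lemma fa_le_one (M : PostQFA α) (w : List α) : M.fa w ≤ 1 := by
  rw [PostQFA.fa, div_le_one (sum_pos M w)]
  linarith [prej_nonneg M w]

/-! #### Complementation -/

def complM (M : PostQFA α) : PostQFA α where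
  n := M.n
  k := M.k
  E := M.E
  kraus := M.kraus
  Qpa := M.Qpr
  Qpr := M.Qpa
  disj := M.disj.symm
  postPos := fun w => by have := M.postPos w; linarith

lemma complM_fa (M : PostQFA α) (w : List α) : (complM M).fa w = 1 - M.fa w := by
  have h := sum_pos M w
  show M.prej w / (M.prej w + M.pacc w) = 1 - M.pacc w / (M.pacc w + M.prej w)
  rw [add_comm (M.prej w)]
  field_simp
  ring

lemma compl_post {L : Set (List α)} (h : PostQAL L) : PostQAL Lᶜ := by
  obtain ⟨M, ε, h0, hh, hrec⟩ := h
  refine ⟨complM M, ε, h0, hh, fun w => ⟨?_, ?_⟩⟩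
  · intro hw
    rw [Set.mem_compl_iff] at hw
    have := (hrec w).2 hw
    rw [complM_fa]
    linarith
  · intro hw
    rw [Set.notMem_compl_iff] at hw
    have := (hrec w).1 hw
    rw [complM_fa]
    linarith

/-! #### Intersection machine -/

def andM (M₁ M₂ : PostQFA α) : PostQFA α where
  n := M₁.n * M₂.n + M₁.n + M₂.n
  k := tK M₁ M₂
  E := tE M₁ M₂
  kraus := tE_kraus M₁ M₂
  Qpa := (M₁.Qpa ×ˢ M₂.Qpa).map (prodEquiv M₁.n M₂.n).toEmbedding
  Qpr := (((M₁.Qpa ×ˢ M₂.Qpr) ∪ (M₁.Qpr ×ˢ M₂.Qpa)) ∪ (M₁.Qpr ×ˢ M₂.Qpr)).map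
      (prodEquiv M₁.n M₂.n).toEmbedding
  disj := by
    rw [Finset.disjoint_map]
    rw [Finset.disjoint_union_right, Finset.disjoint_union_right]
    exact ⟨⟨prod_disj_right M₂.disj, prod_disj_left M₁.disj⟩, prod_disj_left M₁.disj⟩
  postPos := by
    intro w
    have e0 : ((projM ((M₁.Qpa ×ˢ M₂.Qpa).map (prodEquiv M₁.n M₂.n).toEmbedding) *
        qRun (tE M₁ M₂) w).trace).re = M₁.pacc w * M₂.pacc w := tensor_trace M₁ M₂ _ _ w
    have hmap : ((((M₁.Qpa ×ˢ M₂.Qpr) ∪ (M₁.Qpr ×ˢ M₂.Qpa)) ∪ (M₁.Qpr ×ˢ M₂.Qpr)).map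
        (prodEquiv M₁.n M₂.n).toEmbedding)
        = (((M₁.Qpa ×ˢ M₂.Qpr).map (prodEquiv M₁.n M₂.n).toEmbedding ∪
           (M₁.Qpr ×ˢ M₂.Qpa).map (prodEquiv M₁.n M₂.n).toEmbedding) ∪
           (M₁.Qpr ×ˢ M₂.Qpr).map (prodEquiv M₁.n M₂.n).toEmbedding) := by
      rw [Finset.map_union, Finset.map_union]
    have d1 : Disjoint ((M₁.Qpa ×ˢ M₂.Qpr).map (prodEquiv M₁.n M₂.n).toEmbedding)
        ((M₁.Qpr ×ˢ M₂.Qpa).map (prodEquiv M₁.n M₂.n).toEmbedding) := by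
      rw [Finset.disjoint_map]; exact prod_disj_left M₁.disj
    have d2 : Disjoint (((M₁.Qpa ×ˢ M₂.Qpr).map (prodEquiv M₁.n M₂.n).toEmbedding ∪
        (M₁.Qpr ×ˢ M₂.Qpa).map (prodEquiv M₁.n M₂.n).toEmbedding))
        ((M₁.Qpr ×ˢ M₂.Qpr).map (prodEquiv M₁.n M₂.n).toEmbedding) := by
      rw [Finset.disjoint_union_left]
      constructor
      · rw [Finset.disjoint_map]; exact prod_disj_left M₁.disj
      · rw [Finset.disjoint_map]; exact prod_disj_right M₂.disj
    have e1 : ((projM ((((M₁.Qpa ×ˢ M₂.Qpr) ∪ (M₁.Qpr ×ˢ M₂.Qpa)) ∪ (M₁.Qpr ×ˢ M₂.Qpr)).map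
        (prodEquiv M₁.n M₂.n).toEmbedding) * qRun (tE M₁ M₂) w).trace).re
        = M₁.pacc w * M₂.prej w + M₁.prej w * M₂.pacc w + M₁.prej w * M₂.prej w := by
      rw [hmap, trace_projM_mul, qRun_tE, dsum_union d2, dsum_union d1, Complex.add_re,
        Complex.add_re]
      have t1 := tensor_trace M₁ M₂ M₁.Qpa M₂.Qpr w
      have t2 := tensor_trace M₁ M₂ M₁.Qpr M₂.Qpa w
      have t3 := tensor_trace M₁ M₂ M₁.Qpr M₂.Qpr w
      rw [trace_projM_mul, qRun_tE] at t1 t2 t3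
      rw [t1, t2, t3]
      rfl
    show 0 < _
    rw [e0, e1]
    have h1 := sum_pos M₁ w
    have h2 := sum_pos M₂ w
    nlinarith

lemma andM_pacc (M₁ M₂ : PostQFA α) (w : List α) :
    (andM M₁ M₂).pacc w = M₁.pacc w * M₂.pacc w :=
  tensor_trace M₁ M₂ _ _ w

lemma andM_prej (M₁ M₂ : PostQFA α) (w : List α) :
    (andM M₁ M₂).prej w
    = M₁.pacc w * M₂.prej w + M₁.prej w * M₂.pacc w + M₁.prej w * M₂.prej w := by
  have d1 : Disjoint ((M₁.Qpa ×ˢ M₂.Qpr).map (prodEquiv M₁.n M₂.n).toEmbedding)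
      ((M₁.Qpr ×ˢ M₂.Qpa).map (prodEquiv M₁.n M₂.n).toEmbedding) := by
    rw [Finset.disjoint_map]; exact prod_disj_left M₁.disj
  have d2 : Disjoint (((M₁.Qpa ×ˢ M₂.Qpr).map (prodEquiv M₁.n M₂.n).toEmbedding ∪
      (M₁.Qpr ×ˢ M₂.Qpa).map (prodEquiv M₁.n M₂.n).toEmbedding))
      ((M₁.Qpr ×ˢ M₂.Qpr).map (prodEquiv M₁.n M₂.n).toEmbedding) := by
    rw [Finset.disjoint_union_left]
    constructor
    · rw [Finset.disjoint_map]; exact prod_disj_left M₁.disj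
    · rw [Finset.disjoint_map]; exact prod_disj_right M₂.disj
  show ((projM ((((M₁.Qpa ×ˢ M₂.Qpr) ∪ (M₁.Qpr ×ˢ M₂.Qpa)) ∪ (M₁.Qpr ×ˢ M₂.Qpr)).map
      (prodEquiv M₁.n M₂.n).toEmbedding) * qRun (tE M₁ M₂) w).trace).re = _
  rw [Finset.map_union, Finset.map_union, trace_projM_mul, qRun_tE, dsum_union d2, dsum_union d1,
    Complex.add_re, Complex.add_re]
  have t1 := tensor_trace M₁ M₂ M₁.Qpa M₂.Qpr w
  have t2 := tensor_trace M₁ M₂ M₁.Qpr M₂.Qpa w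
  have t3 := tensor_trace M₁ M₂ M₁.Qpr M₂.Qpr w
  rw [trace_projM_mul, qRun_tE] at t1 t2 t3
  rw [t1, t2, t3]
  rfl

lemma andM_fa (M₁ M₂ : PostQFA α) (w : List α) :
    (andM M₁ M₂).fa w = M₁.fa w * M₂.fa w := by
  rw [PostQFA.fa, PostQFA.fa, PostQFA.fa, andM_pacc, andM_prej]
  rw [div_mul_div_comm]
  congr 1
  ring

/-! #### Squaring machine (error amplification) -/

def sqM (M : PostQFA α) : PostQFA α where
  n := M.n * M.n + M.n + M.n
  k := tK M M
  E := tE M M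
  kraus := tE_kraus M M
  Qpa := (M.Qpa ×ˢ M.Qpa).map (prodEquiv M.n M.n).toEmbedding
  Qpr := (M.Qpr ×ˢ M.Qpr).map (prodEquiv M.n M.n).toEmbedding
  disj := by
    rw [Finset.disjoint_map]
    exact prod_disj_left M.disj
  postPos := by
    intro w
    have e0 : ((projM ((M.Qpa ×ˢ M.Qpa).map (prodEquiv M.n M.n).toEmbedding) *
        qRun (tE M M) w).trace).re = M.pacc w * M.pacc w := tensor_trace M M _ _ w
    have e1 : ((projM ((M.Qpr ×ˢ M.Qpr).map (prodEquiv M.n M.n).toEmbedding) *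
        qRun (tE M M) w).trace).re = M.prej w * M.prej w := tensor_trace M M _ _ w
    show 0 < _
    rw [e0, e1]
    have h1 := sum_pos M w
    have h2 := pacc_nonneg M w
    have h3 := prej_nonneg M w
    nlinarith [mul_pos h1 h1, sq_nonneg (M.pacc w - M.prej w)]
  
lemma sqM_pacc (M : PostQFA α) (w : List α) : (sqM M).pacc w = M.pacc w * M.pacc w :=
  tensor_trace M M _ _ w

lemma sqM_prej (M : PostQFA α) (w : List α) : (sqM M).prej w = M.prej w * M.prej w :=
  tensor_trace M M _ _ w

lemma sq_recognizes {L : Set (List α)} (M : PostQFA α) {ε : ℝ}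
    (hrec : M.Recognizes L ε) (h0 : 0 ≤ ε) (hh : ε < 1 / 2) :
    (sqM M).Recognizes L (2 * ε ^ 2) := by
  intro w
  set a := M.pacc w with ha
  set r := M.prej w with hr
  have hs : 0 < a + r := sum_pos M w
  have ha0 : 0 ≤ a := pacc_nonneg M w
  have hr0 : 0 ≤ r := prej_nonneg M w
  have hden : 0 < a * a + r * r := by nlinarith [mul_pos hs hs, sq_nonneg (a - r)]
  have hfa : (sqM M).fa w = (a * a) / (a * a + r * r) := by
    rw [PostQFA.fa, sqM_pacc, sqM_prej]
  constructor
  · intro hw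
    have h1 : 1 - ε ≤ a / (a + r) := (hrec w).1 hw
    have h2 : (1 - ε) * (a + r) ≤ a := by
      rw [le_div_iff₀ hs] at h1
      linarith
    have hX : 0 ≤ ε * a - (1 - ε) * r := by nlinarith
    have hY : 0 ≤ ε * a + (1 - ε) * r := by nlinarith
    rw [hfa, le_div_iff₀ hden]
    nlinarith [mul_nonneg hX hY, mul_nonneg (sq_nonneg (1 - 2 * ε)) (sq_nonneg r)]
  · intro hw
    have h1 : a / (a + r) ≤ ε := (hrec w).2 hw
    have h2 : a ≤ ε * (a + r) := by
      rw [div_le_iff₀ hs] at h1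
      linarith
    rw [hfa, div_le_iff₀ hden]
    nlinarith [mul_le_mul h2 h2 ha0 (by nlinarith : (0:ℝ) ≤ ε * (a + r)),
      sq_nonneg (a - r), sq_nonneg (a + r)]

lemma amplify {L : Set (List α)} (h : PostQAL L) :
    ∃ (M : PostQFA α) (ε : ℝ), 0 ≤ ε ∧ ε ≤ 1 / 4 ∧ M.Recognizes L ε := by
  obtain ⟨M, ε, h0, hh, hrec⟩ := h
  have key : ∀ m : ℕ, ∃ (M' : PostQFA α) (ε' : ℝ),
      0 ≤ ε' ∧ ε' < 1 / 2 ∧ ε' ≤ ε * (2 * ε) ^ m ∧ M'.Recognizes L ε' := by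
    intro m
    induction m with
    | zero => exact ⟨M, ε, h0, hh, by simp, hrec⟩
    | succ m ih =>
      obtain ⟨M', ε', h0', hh', hle, hrec'⟩ := ih
      have hpow : (2 * ε) ^ m ≤ 1 := by
        apply pow_le_one₀ (by linarith) (by linarith)
      have hε'ε : ε' ≤ ε := by nlinarith
      refine ⟨sqM M', 2 * ε' ^ 2, by positivity, by nlinarith, ?_,
        sq_recognizes M' hrec' h0' hh'⟩
      have : 2 * ε' ^ 2 ≤ (2 * ε) * (ε * (2 * ε) ^ m) := by nlinarith
      calc 2 * ε' ^ 2 ≤ (2 * ε) * (ε * (2 * ε) ^ m) := this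
        _ = ε * (2 * ε) ^ (m + 1) := by rw [pow_succ]; ring
  rcases eq_or_lt_of_le h0 with heq | hpos
  · obtain ⟨M', ε', a, b, c, d⟩ := key 0
    exact ⟨M', ε', a, by rw [← heq] at c; simpa using c.trans (by norm_num), d⟩
  · obtain ⟨m, hm⟩ := exists_pow_lt_of_lt_one (x := (1 / 4) / ε) (by positivity)
      (show 2 * ε < 1 by linarith)
    obtain ⟨M', ε', a, b, c, d⟩ := key m
    refine ⟨M', ε', a, ?_, d⟩
    have : ε * (2 * ε) ^ m ≤ 1 / 4 := by
      rw [lt_div_iff₀ hpos] at hm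
      nlinarith
    linarith
 
lemma inter_post {L₁ L₂ : Set (List α)} (h₁ : PostQAL L₁) (h₂ : PostQAL L₂) :
    PostQAL (L₁ ∩ L₂) := by
  obtain ⟨M₁, ε₁, e10, e1q, r1⟩ := amplify h₁
  obtain ⟨M₂, ε₂, e20, e2q, r2⟩ := amplify h₂
  refine ⟨andM M₁ M₂, 7 / 16, by norm_num, by norm_num, fun w => ⟨?_, ?_⟩⟩
  · intro hw
    have f1 := (r1 w).1 hw.1
    have f2 := (r2 w).1 hw.2
    have g1 := fa_le_one M₁ w
    have g2 := fa_le_one M₂ w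
    rw [andM_fa]
    nlinarith [mul_nonneg (sub_nonneg.mpr f1 |>.trans_eq rfl : (0:ℝ) ≤ M₁.fa w - (1 - ε₁))
      (sub_nonneg.mpr f2 : (0:ℝ) ≤ M₂.fa w - (1 - ε₂))]
  · intro hw
    rw [Set.mem_inter_iff] at hw
    rw [andM_fa]
    rcases not_and_or.mp hw with hw1 | hw2
    · have f1 := (r1 w).2 hw1
      have g2 := fa_le_one M₂ w
      have g1 := fa_nonneg M₁ w
      have g2' := fa_nonneg M₂ w
      nlinarith
    · have f2 := (r2 w).2 hw2
      have g1 := fa_le_one M₁ w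
      have g1' := fa_nonneg M₁ w
      have g2' := fa_nonneg M₂ w
      nlinarith

lemma union_post {L₁ L₂ : Set (List α)} (h₁ : PostQAL L₁) (h₂ : PostQAL L₂) :
    PostQAL (L₁ ∪ L₂) := by
  have h := compl_post (inter_post (compl_post h₁) (compl_post h₂))
  rwa [Set.compl_inter, compl_compl, compl_compl] at h

end PQC

/-- `PostQAL` is closed under complementation, union, and intersection. -/
theorem PostQAL_closure {α : Type} [Fintype α] (L L₁ L₂ : Set (List α))
    (hL : PostQAL L) (h₁ : PostQAL L₁) (h₂ : PostQAL L₂) :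
    PostQAL Lᶜ ∧ PostQAL (L₁ ∪ L₂) ∧ PostQAL (L₁ ∩ L₂) :=
  ⟨PQC.compl_post hL, PQC.union_post h₁ h₂, PQC.inter_post h₁ h₂⟩
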